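/- Let b, b̃ ∈ {X,Y,Z}^n be distinct strings and let r := min{ i : b_i ≠ b̃_i } be their first point of disagreement. Then the trace distance between the corresponding prefix/tree states satisfies the upper bound (1/2)‖ρ_b − ρ_{b̃}‖₁ ≤ ∑_{k=r}^{n−1} |β_k| + |α|. -/

import Mathlib

open Matrix Finset

noncomputable section

/-- The three Pauli matrices `σ_X, σ_Y, σ_Z` as `2 × 2` complex matrices. -/
def pauli : Fin 3 → Matrix (Fin 2) (Fin 2) ℂ :=
  ![!![0, 1; 1, 0], !![0, -Complex.I; Complex.I, 0], !![1, 0; 0, -1]]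

/-- The prefix Pauli operator `P_b^{(k)} = (⊗_{i=1}^k σ_{b_i}) ⊗ I^{⊗(n-k)}`, realized as a
`2^n × 2^n` complex matrix indexed by `Fin n → Fin 2` (the `i`-th tensor factor of the Kronecker
product is `σ_{b_i}` if `i < k` (0-indexed) and the identity otherwise). -/
def prefixPauli (n : ℕ) (b : Fin n → Fin 3) (k : ℕ) :
    Matrix (Fin n → Fin 2) (Fin n → Fin 2) ℂ :=
  Matrix.of fun x y =>
    ∏ i : Fin n,
      (if (i : ℕ) < k then pauli (b i) else (1 : Matrix (Fin 2) (Fin 2) ℂ)) (x i) (y i)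

/-- The prefix/tree state `ρ_b = (1/D)(I + ∑_{k=1}^{n-1} β_k P_b^{(k)} + α P_b^{(n)})`,
with `D = 2^n`. -/
def rhoState (n : ℕ) (b : Fin n → Fin 3) (α : ℝ) (β : ℕ → ℝ) :
    Matrix (Fin n → Fin 2) (Fin n → Fin 2) ℂ :=
  ((2 : ℂ) ^ n)⁻¹ •
    (1 + ∑ k ∈ Finset.Icc 1 (n - 1), (β k : ℂ) • prefixPauli n b k
       + (α : ℂ) • prefixPauli n b n)

/-- The trace norm of a Hermitian matrix: the sum of the absolute values of its (real)
eigenvalues. -/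
def traceNorm {d : Type*} [Fintype d] [DecidableEq d] {A : Matrix d d ℂ}
    (hA : A.IsHermitian) : ℝ :=
  ∑ i, |hA.eigenvalues i|

/-! ### Auxiliary lemmas -/


lemma trace_pauli_mul (a c : Fin 3) :
    (pauli a * pauli c).trace = if a = c then 2 else 0 := by
  fin_cases a <;> fin_cases c <;>
    simp [pauli, Matrix.trace, Matrix.mul_apply, Fin.sum_univ_two, Matrix.diag,
      Complex.ext_iff] <;> norm_num

lemma trace_pauli (a : Fin 3) : (pauli a).trace = 0 := by
  fin_cases a <;> simp [pauli, Matrix.trace, Fin.sum_univ_two, Matrix.diag]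

lemma trace_kron {n : ℕ} (M N : Fin n → Matrix (Fin 2) (Fin 2) ℂ) :
    (Matrix.of (fun x y : Fin n → Fin 2 => ∏ i, M i (x i) (y i)) *
      Matrix.of (fun x y : Fin n → Fin 2 => ∏ i, N i (x i) (y i))).trace
      = ∏ i, (M i * N i).trace := by
  have h1 : ∀ i : Fin n, (M i * N i).trace = ∑ p : Fin 2 × Fin 2, M i p.1 p.2 * N i p.2 p.1 := by
    intro i
    rw [Fintype.sum_prod_type]
    simp [Matrix.trace, Matrix.mul_apply, Matrix.diag, Finset.mul_sum]
  simp_rw [h1]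
  rw [Finset.prod_univ_sum (fun _ => Finset.univ)]
  rw [Fintype.piFinset_univ]
  rw [← Fintype.sum_equiv (Equiv.arrowProdEquivProdArrow (Fin n) (fun _ => Fin 2) (fun _ => Fin 2)).symm
      (fun q : ((Fin n → Fin 2) × (Fin n → Fin 2)) =>
        ∏ i, M i (q.1 i) (q.2 i) * N i (q.2 i) (q.1 i))
      (fun q => ∏ i, M i (q i).1 (q i).2 * N i (q i).2 (q i).1)
      (fun q => by simp [Equiv.arrowProdEquivProdArrow])]
  rw [Fintype.sum_prod_type]
  simp [Matrix.trace, Matrix.mul_apply, Matrix.diag, Finset.prod_mul_distrib]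

lemma trace_prefix_mul (n : ℕ) (b c : Fin n → Fin 3) (k l : ℕ) :
    (prefixPauli n b k * prefixPauli n c l).trace
      = ∏ i : Fin n, ((if (i : ℕ) < k then pauli (b i) else 1) *
          (if (i : ℕ) < l then pauli (c i) else 1)).trace :=
  trace_kron _ _

lemma trace_prefix_mul_lt {n k l : ℕ} (b c : Fin n → Fin 3) (hkl : k < l) (hln : l ≤ n) :
    (prefixPauli n b k * prefixPauli n c l).trace = 0 := by
  rw [trace_prefix_mul]
  refine Finset.prod_eq_zero (Finset.mem_univ (⟨k, lt_of_lt_of_le hkl hln⟩ : Fin n)) ?_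
  simp only [lt_irrefl, if_false, if_pos hkl, one_mul]
  exact trace_pauli _

lemma trace_prefix_mul_gt {n k l : ℕ} (b c : Fin n → Fin 3) (hkl : l < k) (hln : k ≤ n) :
    (prefixPauli n b k * prefixPauli n c l).trace = 0 := by
  rw [trace_prefix_mul]
  refine Finset.prod_eq_zero (Finset.mem_univ (⟨l, lt_of_lt_of_le hkl hln⟩ : Fin n)) ?_
  simp only [lt_irrefl, if_false, if_pos hkl, mul_one]
  exact trace_pauli _

lemma trace_prefix_mul_agree {n k : ℕ} {b c : Fin n → Fin 3}
    (h : ∀ i : Fin n, (i : ℕ) < k → b i = c i) :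
    (prefixPauli n b k * prefixPauli n c k).trace = 2 ^ n := by
  rw [trace_prefix_mul]
  have : ∀ i : Fin n, ((if (i : ℕ) < k then pauli (b i) else 1) *
      (if (i : ℕ) < k then pauli (c i) else 1)).trace = 2 := by
    intro i
    by_cases hi : (i : ℕ) < k
    · simp [hi, trace_pauli_mul, h i hi]
    · simp [hi, Matrix.trace_one]
  rw [Finset.prod_congr rfl (fun i _ => this i), Finset.prod_const]
  simp

lemma trace_prefix_mul_diff {n k : ℕ} {b c : Fin n → Fin 3} (j : Fin n)
    (hj : (j : ℕ) < k) (hbc : b j ≠ c j) :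
    (prefixPauli n b k * prefixPauli n c k).trace = 0 := by
  rw [trace_prefix_mul]
  refine Finset.prod_eq_zero (Finset.mem_univ j) ?_
  simp [hj, trace_pauli_mul, hbc]

lemma prefixPauli_congr {n k : ℕ} {b c : Fin n → Fin 3}
    (h : ∀ i : Fin n, (i : ℕ) < k → b i = c i) :
    prefixPauli n b k = prefixPauli n c k := by
  ext x y
  simp only [prefixPauli, Matrix.of_apply]
  apply Finset.prod_congr rfl
  intro i _
  by_cases hi : (i : ℕ) < k
  · simp [hi, h i hi]
  · simp [hi]

lemma sum_sq_eigenvalues {d : Type*} [Fintype d] [DecidableEq d] {A : Matrix d d ℂ}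
    (hA : A.IsHermitian) :
    ((∑ i, hA.eigenvalues i ^ 2 : ℝ) : ℂ) = (A * A).trace := by
  have hU : star (hA.eigenvectorUnitary : Matrix d d ℂ) *
      (hA.eigenvectorUnitary : Matrix d d ℂ) = 1 :=
    (Unitary.mem_iff.mp hA.eigenvectorUnitary.2).1
  set U := (hA.eigenvectorUnitary : Matrix d d ℂ)
  set D := Matrix.diagonal ((RCLike.ofReal : ℝ → ℂ) ∘ hA.eigenvalues) with hDdef
  have hspec : A = U * D * star U := hA.spectral_theorem
  have h2 : A * A = U * (D * D) * star U := by
    rw [hspec, show U * D * star U * (U * D * star U) = U * D * (star U * U) * (D * star U) by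
      noncomm_ring, hU, mul_one]
    noncomm_ring
  rw [h2, Matrix.trace_mul_cycle, ← Matrix.mul_assoc, hU, Matrix.one_mul, hDdef,
    Matrix.diagonal_mul_diagonal, Matrix.trace_diagonal]
  push_cast
  ring_nf
  simp [pow_two]

/-- Trace-distance upper bound: if the hidden strings of two prefix/tree states first disagree
at the (1-indexed) position `r`, then `(1/2)‖ρ_b − ρ_{b̃}‖₁ ≤ ∑_{k=r}^{n-1} |β_k| + |α|`. -/
theorem rhoState_traceDist_upper (n : ℕ) (hn : 1 ≤ n) (b btil : Fin n → Fin 3)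
    (α : ℝ) (β : ℕ → ℝ) (r : ℕ) (hr1 : 1 ≤ r) (hrn : r ≤ n)
    (hagree : ∀ i : Fin n, (i : ℕ) + 1 < r → b i = btil i)
    (hdiff : ∀ i : Fin n, (i : ℕ) + 1 = r → b i ≠ btil i)
    (hΔ : (rhoState n b α β - rhoState n btil α β).IsHermitian) :
    (1 / 2) * traceNorm hΔ ≤ (∑ k ∈ Finset.Icc r (n - 1), |β k|) + |α| := by
  classical
  set S : Finset ℕ := insert n (Finset.Icc r (n - 1)) with hS
  set γ : ℕ → ℝ := fun k => if k = n then α else β k with hγ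
  set Q : ℕ → Matrix (Fin n → Fin 2) (Fin n → Fin 2) ℂ :=
    fun k => prefixPauli n b k - prefixPauli n btil k with hQdef
  have hnot : n ∉ Finset.Icc r (n - 1) := by
    simp only [Finset.mem_Icc, not_and]; intro _; omega
  have hmemS : ∀ k ∈ S, r ≤ k ∧ k ≤ n := by
    intro k hk
    rcases Finset.mem_insert.mp hk with h | h
    · subst h; exact ⟨hrn, le_rfl⟩
    · rw [Finset.mem_Icc] at h; omega
  have hrn' : r - 1 < n := by omega
  have hbj : b ⟨r - 1, hrn'⟩ ≠ btil ⟨r - 1, hrn'⟩ := hdiff _ (by simp; omega)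
  -- trace of products of the difference operators
  have hQtr : ∀ k ∈ S, ∀ l ∈ S, (Q k * Q l).trace = if k = l then (2 : ℂ) ^ (n + 1) else 0 := by
    intro k hk l hl
    obtain ⟨hrk, hkn⟩ := hmemS k hk
    obtain ⟨hrl, hln⟩ := hmemS l hl
    have expand : (Q k * Q l).trace =
        (prefixPauli n b k * prefixPauli n b l).trace
        - (prefixPauli n b k * prefixPauli n btil l).trace
        - (prefixPauli n btil k * prefixPauli n b l).trace
        + (prefixPauli n btil k * prefixPauli n btil l).trace := by
      have : Q k * Q l = prefixPauli n b k * prefixPauli n b l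
          - prefixPauli n b k * prefixPauli n btil l
          - prefixPauli n btil k * prefixPauli n b l
          + prefixPauli n btil k * prefixPauli n btil l := by
        rw [hQdef]; noncomm_ring
      rw [this, Matrix.trace_add, Matrix.trace_sub, Matrix.trace_sub]
    rcases lt_trichotomy k l with h | h | h
    · rw [expand, trace_prefix_mul_lt _ _ h hln, trace_prefix_mul_lt _ _ h hln,
        trace_prefix_mul_lt _ _ h hln, trace_prefix_mul_lt _ _ h hln,
        if_neg (Nat.ne_of_lt h)]
      ring
    · subst h
      rw [expand, trace_prefix_mul_agree (fun i _ => rfl),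
        trace_prefix_mul_diff ⟨r - 1, hrn'⟩ (by simp; omega) hbj,
        trace_prefix_mul_diff ⟨r - 1, hrn'⟩ (by simp; omega) (Ne.symm hbj),
        trace_prefix_mul_agree (fun i _ => rfl), if_pos rfl]
      ring
    · rw [expand, trace_prefix_mul_gt _ _ h hkn, trace_prefix_mul_gt _ _ h hkn,
        trace_prefix_mul_gt _ _ h hkn, trace_prefix_mul_gt _ _ h hkn,
        if_neg (Nat.ne_of_gt h)]
      ring
  -- the difference of the states
  have hdelta : rhoState n b α β - rhoState n btil α β
      = ((2 : ℂ) ^ n)⁻¹ • ∑ k ∈ S, (γ k : ℂ) • Q k := by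
    rw [rhoState, rhoState, ← smul_sub]
    congr 1
    have hsub : ∑ k ∈ Finset.Icc r (n - 1), (β k : ℂ) • Q k
        = ∑ k ∈ Finset.Icc 1 (n - 1), (β k : ℂ) • Q k := by
      refine Finset.sum_subset (Finset.Icc_subset_Icc_left hr1) (fun k hk1 hk2 => ?_)
      rw [Finset.mem_Icc] at hk1
      rw [Finset.mem_Icc] at hk2
      have hkr : k < r := by omega
      have : prefixPauli n b k = prefixPauli n btil k :=
        prefixPauli_congr (fun i hi => hagree i (by omega))
      rw [hQdef]
      simp [this]
    have hmain : ∑ k ∈ S, (γ k : ℂ) • Q k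
        = (α : ℂ) • Q n + ∑ k ∈ Finset.Icc 1 (n - 1), (β k : ℂ) • Q k := by
      rw [hS, Finset.sum_insert hnot, ← hsub]
      congr 1
      · simp [hγ]
      · refine Finset.sum_congr rfl (fun k hk => ?_)
        rw [Finset.mem_Icc] at hk
        have : k ≠ n := by omega
        simp [hγ, this]
    rw [hmain, hQdef]
    simp only [smul_sub, Finset.sum_sub_distrib]
    abel
  -- trace of the square
  have htr2 : ((rhoState n b α β - rhoState n btil α β) *
        (rhoState n b α β - rhoState n btil α β)).trace
      = ((2 * (∑ k ∈ S, γ k ^ 2) / 2 ^ n : ℝ) : ℂ) := by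
    rw [hdelta, Matrix.smul_mul, Matrix.mul_smul, Matrix.trace_smul, Matrix.trace_smul,
      Finset.sum_mul_sum]
    simp only [Matrix.trace_sum, Matrix.smul_mul, Matrix.mul_smul, Matrix.trace_smul,
      smul_eq_mul]
    have hinner : ∀ k ∈ S, ∑ l ∈ S, (γ l : ℂ) * ((γ k : ℂ) * (Q k * Q l).trace)
        = (γ k : ℂ) ^ 2 * 2 ^ (n + 1) := by
      intro k hk
      rw [Finset.sum_eq_single k]
      · rw [hQtr k hk k hk, if_pos rfl]; ring
      · intro l hl hlk
        rw [hQtr k hk l hl, if_neg (Ne.symm hlk)]; ring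
      · intro h; exact absurd hk h
    rw [Finset.sum_congr rfl hinner, ← Finset.sum_mul]
    push_cast
    have h2n : ((2 : ℂ) ^ n) ≠ 0 := pow_ne_zero _ two_ne_zero
    field_simp
    ring
  -- sum of squared eigenvalues
  have hB : ∑ i, hΔ.eigenvalues i ^ 2 = 2 * (∑ k ∈ S, γ k ^ 2) / 2 ^ n := by
    have h := sum_sq_eigenvalues hΔ
    rw [htr2] at h
    exact_mod_cast h
  -- Cauchy–Schwarz
  have ht0 : 0 ≤ traceNorm hΔ := Finset.sum_nonneg (fun _ _ => abs_nonneg _)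
  have hcard : (Fintype.card (Fin n → Fin 2) : ℝ) = 2 ^ n := by simp
  have hCS : (traceNorm hΔ) ^ 2 ≤ 2 ^ n * ∑ i, hΔ.eigenvalues i ^ 2 := by
    have h := Finset.sum_mul_sq_le_sq_mul_sq Finset.univ (fun _ => (1 : ℝ))
      (fun i => |hΔ.eigenvalues i|)
    simpa [traceNorm, sq_abs, Finset.card_univ, hcard] using h
  have h2n : (0 : ℝ) < 2 ^ n := by positivity
  have key : (traceNorm hΔ) ^ 2 ≤ 2 * ∑ k ∈ S, γ k ^ 2 := by
    rw [hB] at hCS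
    calc (traceNorm hΔ) ^ 2 ≤ 2 ^ n * (2 * (∑ k ∈ S, γ k ^ 2) / 2 ^ n) := hCS
      _ = 2 * ∑ k ∈ S, γ k ^ 2 := by field_simp
  have hRHS : (∑ k ∈ Finset.Icc r (n - 1), |β k|) + |α| = ∑ k ∈ S, |γ k| := by
    rw [hS, Finset.sum_insert hnot]
    have hcg : ∀ k ∈ Finset.Icc r (n - 1), |γ k| = |β k| := by
      intro k hk
      rw [Finset.mem_Icc] at hk
      have : k ≠ n := by omega
      simp [hγ, this]
    rw [Finset.sum_congr rfl hcg]
    simp [hγ, add_comm]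
  have hR0 : 0 ≤ ∑ k ∈ S, |γ k| := Finset.sum_nonneg (fun _ _ => abs_nonneg _)
  have hB0 : 0 ≤ ∑ k ∈ S, γ k ^ 2 := Finset.sum_nonneg (fun _ _ => sq_nonneg _)
  have hBle : ∑ k ∈ S, γ k ^ 2 ≤ (∑ k ∈ S, |γ k|) ^ 2 := by
    have h := Finset.sum_sq_le_sq_sum_of_nonneg
      (s := S) (f := fun k => |γ k|) (fun i _ => abs_nonneg _)
    simpa [sq_abs] using h
  rw [hRHS]
  have h1 : ((1 / 2) * traceNorm hΔ) ^ 2 ≤ (∑ k ∈ S, |γ k|) ^ 2 := by nlinarith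
  calc (1 / 2) * traceNorm hΔ = Real.sqrt (((1 / 2) * traceNorm hΔ) ^ 2) :=
        (Real.sqrt_sq (by positivity)).symm
    _ ≤ Real.sqrt ((∑ k ∈ S, |γ k|) ^ 2) := Real.sqrt_le_sqrt h1
    _ = ∑ k ∈ S, |γ k| := Real.sqrt_sq hR0

end
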